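/- Let B₊ be an oriented incidence matrix of a connected graph (the null space of B₊ᵀ equals the span of the all-ones vector) with diagonal weight matrix W₊ having strictly positive entries, and set L₊ = B₊·W₊·B₊ᵀ. Let u ≠ v be two vertices, let d > 0, and consider the Laplacian with one additional negative edge of weight −d between u and v: L = L₊ − d·(e_u − e_v)·(e_u − e_v)ᵀ. Let R_uv = (e_u − e_v)ᵀ·L₊†·(e_u − e_v) be the effective resistance between u and v in the positive subgraph, where L₊† is the Moore–Penrose pseudoinverse of L₊. Then L is positive semidefinite if and only if d ≤ 1 / R_uv. -/

import Mathlib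

open Matrix

/-- `B` is an oriented incidence matrix: every column has exactly one `1`,
exactly one `-1`, and zeros elsewhere. -/
def IsIncidenceMatrix {V E : Type*} (B : Matrix V E ℝ) : Prop :=
  ∀ e : E, ∃ i j : V, i ≠ j ∧ B i e = 1 ∧ B j e = -1 ∧
    ∀ k : V, k ≠ i → k ≠ j → B k e = 0

/-- Cauchy–Schwarz for the real dot product. -/
lemma dotProduct_sq_le {n : Type*} [Fintype n] (a b : n → ℝ) :
    (a ⬝ᵥ b) ^ 2 ≤ (a ⬝ᵥ a) * (b ⬝ᵥ b) := by
  simpa [dotProduct, sq] using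
    Finset.sum_mul_sq_le_sq_mul_sq Finset.univ a b

/-- adding a single negative edge of weight `−d` between `u` and `v` to a
connected positively weighted graph keeps the Laplacian positive semidefinite iff
`d ≤ 1 / R_uv`, where `R_uv` is the effective resistance between `u` and `v`. -/
theorem single_negative_edge_psd_iff_effective_resistance
    {V Ep : Type*} [Fintype V] [Fintype Ep]
    [DecidableEq V] [DecidableEq Ep] [Nonempty V]
    (Bp : Matrix V Ep ℝ) (hBp : IsIncidenceMatrix Bp)
    (wp : Ep → ℝ) (hwp : ∀ e, 0 < wp e)
    -- the positive graph is connected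
    (hConn : LinearMap.ker Bpᵀ.mulVecLin = Submodule.span ℝ {(fun _ : V => (1 : ℝ))})
    -- `Ld` is the Moore–Penrose pseudoinverse of `L₊ = B₊·W₊·B₊ᵀ`
    (Ld : Matrix V V ℝ)
    (hp1 : (Bp * Matrix.diagonal wp * Bpᵀ) * Ld * (Bp * Matrix.diagonal wp * Bpᵀ) =
      Bp * Matrix.diagonal wp * Bpᵀ)
    (hp2 : Ld * (Bp * Matrix.diagonal wp * Bpᵀ) * Ld = Ld)
    (hp3 : ((Bp * Matrix.diagonal wp * Bpᵀ) * Ld)ᵀ = (Bp * Matrix.diagonal wp * Bpᵀ) * Ld)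
    (hp4 : (Ld * (Bp * Matrix.diagonal wp * Bpᵀ))ᵀ = Ld * (Bp * Matrix.diagonal wp * Bpᵀ))
    (u v : V) (huv : u ≠ v) (d : ℝ) (hd : 0 < d) :
    (Bp * Matrix.diagonal wp * Bpᵀ -
        d • Matrix.vecMulVec (Pi.single u 1 - Pi.single v 1)
          (Pi.single u 1 - Pi.single v 1)).PosSemidef ↔
      d ≤ 1 / ((Pi.single u 1 - Pi.single v 1) ⬝ᵥ
        Ld.mulVec (Pi.single u 1 - Pi.single v 1)) := by
  set L : Matrix V V ℝ := Bp * Matrix.diagonal wp * Bpᵀ with hLdef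
  set x : V → ℝ := Pi.single u 1 - Pi.single v 1 with hxdef
  set C : Matrix Ep V ℝ := Matrix.diagonal (fun e => Real.sqrt (wp e)) * Bpᵀ with hCdef
  have hCC : Cᵀ * C = L := by
    rw [hCdef, hLdef, Matrix.transpose_mul, Matrix.transpose_transpose,
      Matrix.diagonal_transpose, Matrix.mul_assoc, ← Matrix.mul_assoc (Matrix.diagonal _),
      Matrix.diagonal_mul_diagonal, ← Matrix.mul_assoc]
    have hw : (fun e => Real.sqrt (wp e) * Real.sqrt (wp e)) = wp :=
      funext fun e => Real.mul_self_sqrt (hwp e).le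
    rw [hw]
  have hLsym : Lᵀ = L := by
    rw [hLdef]
    simp [Matrix.transpose_mul, Matrix.mul_assoc]
  -- the quadratic form of L
  have hquad : ∀ a b : V → ℝ, a ⬝ᵥ L *ᵥ b = (C *ᵥ a) ⬝ᵥ (C *ᵥ b) := by
    intro a b
    rw [← hCC, ← Matrix.mulVec_mulVec, Matrix.dotProduct_mulVec, Matrix.vecMul_transpose]
  -- the all-ones vector is in the kernel
  have hone : Bpᵀ *ᵥ (fun _ : V => (1 : ℝ)) = 0 := by
    have h : (fun _ : V => (1 : ℝ)) ∈ LinearMap.ker Bpᵀ.mulVecLin := by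
      rw [hConn]; exact Submodule.mem_span_singleton_self _
    rw [LinearMap.mem_ker, Matrix.mulVecLin_apply] at h
    exact h
  have hL1 : L *ᵥ (fun _ : V => (1 : ℝ)) = 0 := by
    rw [hLdef, ← Matrix.mulVec_mulVec, ← Matrix.mulVec_mulVec, hone]
    simp
  -- kernel of L is contained in span of ones
  have hker : ∀ y : V → ℝ, L *ᵥ y = 0 → ∃ c : ℝ, y = fun _ => c := by
    intro y hy
    have h0 : (C *ᵥ y) ⬝ᵥ (C *ᵥ y) = 0 := by rw [← hquad, hy]; simp
    have hCy : C *ᵥ y = 0 := by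
      funext e
      have := (Finset.sum_eq_zero_iff_of_nonneg (fun i _ => mul_self_nonneg ((C *ᵥ y) i))).mp
        h0 e (Finset.mem_univ e)
      exact mul_self_eq_zero.mp this
    have hBy : Bpᵀ *ᵥ y = 0 := by
      funext e
      have h1 : (C *ᵥ y) e = Real.sqrt (wp e) * (Bpᵀ *ᵥ y) e := by
        rw [hCdef, ← Matrix.mulVec_mulVec, Matrix.mulVec_diagonal]
      have h2 : (C *ᵥ y) e = 0 := by rw [hCy]; rfl
      have hs : Real.sqrt (wp e) ≠ 0 := ne_of_gt (Real.sqrt_pos.mpr (hwp e))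
      have h3 : Real.sqrt (wp e) * (Bpᵀ *ᵥ y) e = 0 := by rw [← h1, h2]
      exact (mul_eq_zero.mp h3).resolve_left hs
    have : y ∈ LinearMap.ker Bpᵀ.mulVecLin := by
      rw [LinearMap.mem_ker, Matrix.mulVecLin_apply]
      exact hBy
    rw [hConn] at this
    obtain ⟨c, hc⟩ := Submodule.mem_span_singleton.mp this
    exact ⟨c, by rw [← hc]; funext i; simp⟩
  -- key: L * (Ld *ᵥ x) = x
  have hLP : L * (L * Ld) = L := by
    have h1 : L * Ldᵀ * Lᵀ = Lᵀ := by
      calc L * Ldᵀ * Lᵀ = (L * Ld * L)ᵀ := by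
            simp [Matrix.transpose_mul, hLsym, Matrix.mul_assoc]
        _ = Lᵀ := by rw [hp1]
    calc L * (L * Ld) = L * (L * Ld)ᵀ := by rw [hp3]
      _ = L * Ldᵀ * Lᵀ := by simp [Matrix.transpose_mul, hLsym, Matrix.mul_assoc]
      _ = Lᵀ := h1
      _ = L := hLsym
  have hsumx : (fun _ : V => (1 : ℝ)) ⬝ᵥ x = 0 := by
    simp [hxdef, dotProduct, Finset.sum_sub_distrib]
  have hxu : x u = 1 := by simp [hxdef, Pi.single_apply, huv, (Ne.symm huv)]
  have hkey : L *ᵥ (Ld *ᵥ x) = x := by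
    set q : V → ℝ := x - (L * Ld) *ᵥ x with hq
    have hLq : L *ᵥ q = 0 := by
      have h5 : L *ᵥ ((L * Ld) *ᵥ x) = L *ᵥ x := by
        rw [Matrix.mulVec_mulVec, hLP]
      rw [hq, Matrix.mulVec_sub, h5, sub_self]
    obtain ⟨c, hc⟩ := hker q hLq
    have hdot : (fun _ : V => (1 : ℝ)) ⬝ᵥ q = 0 := by
      rw [hq, dotProduct_sub, hsumx, Matrix.dotProduct_mulVec, ← Matrix.mulVec_transpose]
      have : (L * Ld)ᵀ *ᵥ (fun _ : V => (1 : ℝ)) = 0 := by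
        rw [Matrix.transpose_mul, hLsym, ← Matrix.mulVec_mulVec, hL1]
        simp
      rw [this]
      simp
    have hc0 : c = 0 := by
      rw [hc] at hdot
      have h1 : (Fintype.card V : ℝ) * c = 0 := by
        have h2 : (fun _ : V => (1 : ℝ)) ⬝ᵥ (fun _ => c) = (Fintype.card V : ℝ) * c := by
          simp [dotProduct, Finset.sum_const, nsmul_eq_mul]
        rw [h2] at hdot; exact hdot
      exact (mul_eq_zero.mp h1).resolve_left (Nat.cast_ne_zero.mpr Fintype.card_ne_zero)
    have hq0 : x - (L * Ld) *ᵥ x = 0 := by rw [← hq, hc, hc0]; funext i; rfl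
    have h6 := sub_eq_zero.mp hq0
    rw [Matrix.mulVec_mulVec, ← h6]
  set z : V → ℝ := Ld *ᵥ x with hz
  set R : ℝ := x ⬝ᵥ z with hR
  have hzLz : z ⬝ᵥ L *ᵥ z = R := by rw [hkey, dotProduct_comm]
  have hxne : x ≠ 0 := by
    intro h
    have : x u = 0 := by rw [h]; rfl
    rw [hxu] at this; exact one_ne_zero this
  have hRpos : 0 < R := by
    have hRnn : 0 ≤ R := by
      rw [← hzLz, hquad]
      exact Finset.sum_nonneg fun i _ => mul_self_nonneg _
    rcases hRnn.lt_or_eq with h | h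
    · exact h
    · exfalso
      have h0 : (C *ᵥ z) ⬝ᵥ (C *ᵥ z) = 0 := by rw [← hquad, hzLz, ← h]
      have hCz : C *ᵥ z = 0 := by
        funext e
        have := (Finset.sum_eq_zero_iff_of_nonneg
          (fun i _ => mul_self_nonneg ((C *ᵥ z) i))).mp h0 e (Finset.mem_univ e)
        exact mul_self_eq_zero.mp this
      have : L *ᵥ z = 0 := by
        rw [← hCC, ← Matrix.mulVec_mulVec, hCz]
        simp
      rw [hkey] at this
      exact hxne this
  have hform : ∀ y : V → ℝ,
      y ⬝ᵥ (L - d • Matrix.vecMulVec x x) *ᵥ y = y ⬝ᵥ L *ᵥ y - d * (x ⬝ᵥ y) ^ 2 := by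
    intro y
    rw [Matrix.sub_mulVec, dotProduct_sub, Matrix.smul_mulVec, dotProduct_smul]
    congr 1
    have : Matrix.vecMulVec x x *ᵥ y = (x ⬝ᵥ y) • x := by
      funext i
      simp only [Matrix.mulVec, Matrix.vecMulVec_apply, dotProduct, Pi.smul_apply,
        smul_eq_mul, mul_assoc]
      rw [← Finset.mul_sum, mul_comm]
    rw [this]
    simp [dotProduct_smul, smul_eq_mul, dotProduct_comm y x, sq]
  have hherm : (L - d • Matrix.vecMulVec x x).IsHermitian := by
    have : (L - d • Matrix.vecMulVec x x)ᵀ = L - d • Matrix.vecMulVec x x := by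
      rw [Matrix.transpose_sub, hLsym, Matrix.transpose_smul]
      congr 2
      funext i j
      simp [Matrix.transpose_apply, Matrix.vecMulVec_apply, mul_comm]
    rw [Matrix.IsHermitian, Matrix.conjTranspose_eq_transpose_of_trivial]; exact this
  constructor
  · -- PSD → d ≤ 1/R
    intro hpsd
    have h := hpsd.dotProduct_mulVec_nonneg z
    simp only [star_trivial] at h
    rw [hform z, hzLz, ← hR] at h
    rw [le_div_iff₀ hRpos]
    nlinarith [sq_nonneg R]
  · -- d ≤ 1/R → PSD
    intro hdle
    have hdR : d * R ≤ 1 := by rwa [le_div_iff₀ hRpos] at hdle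
    refine Matrix.PosSemidef.of_dotProduct_mulVec_nonneg hherm fun y => ?_
    simp only [star_trivial]
    rw [hform y]
    have hyL : 0 ≤ y ⬝ᵥ L *ᵥ y := by
      rw [hquad]; exact Finset.sum_nonneg fun i _ => mul_self_nonneg _
    have hxy : x ⬝ᵥ y = (C *ᵥ z) ⬝ᵥ (C *ᵥ y) := by
      rw [← hquad, Matrix.dotProduct_mulVec, ← Matrix.mulVec_transpose, hLsym, hkey]
    have hcs : (x ⬝ᵥ y) ^ 2 ≤ R * (y ⬝ᵥ L *ᵥ y) := by
      rw [hxy, hquad y, ← hzLz, hquad z]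
      exact dotProduct_sq_le _ _
    nlinarith
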